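/- (Convergence of approximate minimizers under epi-convergence.) Let X be a topological space, f_n : X → ℝ∪{±∞} a sequence of functions epi-converging to f, and x_n points with f_n(x_n) ≤ inf f_n + ε_n where ε_n ↓ 0. Then for every subsequence x_{n_k} converging to a point x_0, one has f(x_0) = inf f and f_{n_k}(x_{n_k}) → inf f. -/

import Mathlib

open Filter Topology

/-- Attouch's theorem on convergence of approximate minimizers under epi-convergence
(Proposition 2.1): if `f_n` epi-converges to `f` and `x_n` are `ε_n`-approximate
minimizers of `f_n` with `ε_n ↓ 0`, then along any subsequence `x_{n_k} → x₀` we have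
`f x₀ = inf f` and `f_{n_k}(x_{n_k}) → inf f`. -/
theorem epi_convergence_approx_minimizers
    {X : Type*} [TopologicalSpace X]
    (f : X → EReal) (fn : ℕ → X → EReal)
    -- epi-convergence, lower part: along every sequence converging to x the liminf dominates f x
    (hlower : ∀ (x : X) (u : ℕ → X), Tendsto u atTop (𝓝 x) →
      f x ≤ liminf (fun n => fn n (u n)) atTop)
    -- epi-convergence, upper part: some sequence converging to x achieves f x in the limsup
    (hupper : ∀ x : X, ∃ u : ℕ → X, Tendsto u atTop (𝓝 x) ∧
      limsup (fun n => fn n (u n)) atTop ≤ f x)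
    (ε : ℕ → ℝ) (hε0 : ∀ n, 0 ≤ ε n) (hεanti : Antitone ε)
    (hεlim : Tendsto ε atTop (𝓝 0))
    (x : ℕ → X) (hx : ∀ n, fn n (x n) ≤ (⨅ z, fn n z) + (ε n : EReal))
    (φ : ℕ → ℕ) (hφ : StrictMono φ) (x₀ : X)
    (hconv : Tendsto (fun k => x (φ k)) atTop (𝓝 x₀)) :
    f x₀ = (⨅ z, f z) ∧
      Tendsto (fun k => fn (φ k) (x (φ k))) atTop (𝓝 (⨅ z, f z)) := by
  classical
  have hφtop : Tendsto φ atTop atTop := hφ.tendsto_atTop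
  -- Step B: limsup along full sequence is ≤ f z for every z
  have hB : ∀ z : X, limsup (fun n => fn n (x n)) atTop ≤ f z := by
    intro z
    obtain ⟨u, hu, hlim⟩ := hupper z
    have hεE : Tendsto (fun n => (ε n : EReal)) atTop (𝓝 (0 : EReal)) := by
      have : Tendsto (fun r : ℝ => (r : EReal)) (𝓝 0) (𝓝 ((0:ℝ) : EReal)) :=
        continuous_coe_real_ereal.continuousAt
      simpa [Function.comp_def] using this.comp hεlim
    have hεlimsup : limsup (fun n => (ε n : EReal)) atTop = 0 := hεE.limsup_eq
    have hpt : ∀ n, fn n (x n) ≤ ((fun n => fn n (u n)) + fun n => (ε n : EReal)) n := by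
      intro n
      exact (hx n).trans (add_le_add_left (iInf_le _ _) _)
    have h1 : limsup (fun n => fn n (x n)) atTop ≤
        limsup ((fun n => fn n (u n)) + fun n => (ε n : EReal)) atTop :=
      limsup_le_limsup (Eventually.of_forall hpt)
    refine h1.trans ?_
    refine le_of_forall_gt_imp_ge_of_dense fun c hc => ?_
    have := EReal.limsup_add_le_of_le (u := fun n => fn n (u n))
      (v := fun n => (ε n : EReal)) (f := atTop) (a := c) (b := 0)
      (lt_of_le_of_lt hlim hc) (le_of_eq hεlimsup)
    simpa using this
  -- limsup along the subsequence ≤ limsup along the full sequence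
  have hmap : map φ atTop ≤ atTop := hφtop
  have hsub : limsup (fun k => fn (φ k) (x (φ k))) atTop ≤
      limsup (fun n => fn n (x n)) atTop := by
    have := limsup_le_limsup_of_le (u := fun n => fn n (x n)) hmap
    simpa [Filter.limsup, Filter.map_map, Function.comp_def] using this
  have hBsub : limsup (fun k => fn (φ k) (x (φ k))) atTop ≤ ⨅ z, f z :=
    hsub.trans (le_iInf hB)
  -- Step A: f x₀ ≤ liminf along the subsequence
  have hA : f x₀ ≤ liminf (fun k => fn (φ k) (x (φ k))) atTop := by
    set u : ℕ → X := fun n => if n ∈ Set.range φ then x n else x₀ with hu_def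
    have huφ : ∀ k, u (φ k) = x (φ k) := by
      intro k; simp [hu_def, Set.mem_range]
    have hu : Tendsto u atTop (𝓝 x₀) := by
      rw [tendsto_atTop_nhds] at hconv ⊢
      intro V hV hVopen
      obtain ⟨K, hK⟩ := hconv V hV hVopen
      refine ⟨φ K, fun n hn => ?_⟩
      by_cases h : n ∈ Set.range φ
      · obtain ⟨k, rfl⟩ := h
        have : K ≤ k := (hφ.le_iff_le).mp hn
        simpa [huφ] using hK k this
      · have h' : ¬ ∃ y, φ y = n := fun ⟨y, hy⟩ => h ⟨y, hy⟩
        simp [hu_def, h', hV]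
    have h1 : f x₀ ≤ liminf (fun n => fn n (u n)) atTop := hlower x₀ u hu
    refine h1.trans ?_
    have h2 : liminf (fun n => fn n (u n)) atTop ≤
        liminf (fun k => fn (φ k) (u (φ k))) atTop := by
      have := liminf_le_liminf_of_le (u := fun n => fn n (u n)) hmap
      simpa [Filter.liminf, Filter.map_map, Function.comp_def] using this
    refine h2.trans (le_of_eq ?_)
    congr 1
    ext k
    rw [huφ]
  have hle : (⨅ z, f z) ≤ f x₀ := iInf_le _ _
  have hliminf_le_limsup : liminf (fun k => fn (φ k) (x (φ k))) atTop ≤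
      limsup (fun k => fn (φ k) (x (φ k))) atTop := liminf_le_limsup
  have heq1 : f x₀ = ⨅ z, f z :=
    le_antisymm (hA.trans (hliminf_le_limsup.trans hBsub)) hle
  have hliminf : liminf (fun k => fn (φ k) (x (φ k))) atTop = ⨅ z, f z :=
    le_antisymm (hliminf_le_limsup.trans hBsub) (heq1.symm.le.trans hA)
  have hlimsup : limsup (fun k => fn (φ k) (x (φ k))) atTop = ⨅ z, f z :=
    le_antisymm hBsub (hliminf ▸ hliminf_le_limsup)
  exact ⟨heq1, tendsto_of_liminf_eq_limsup hliminf hlimsup⟩
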